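/- Let g be an element of the first Grigorchuk group G and let n ∈ ℕ satisfy n ≥ ⌈log₂ |g|_S⌉ + 2. Then g fixes the vertex ρ_n = 1^n if and only if g fixes the boundary point ρ = 1^∞ ∈ {0,1}^ℕ (under the continuous extension of the action of G to the boundary ∂T = {0,1}^ℕ of T). -/

import Mathlib

noncomputable section

/-! ### The Grigorchuk generators -/

namespace Grig

def aFun : List Bool → List Bool
  | [] => []
  | x :: w => (!x) :: w

mutual
  def bFun : List Bool → List Bool
    | [] => []
    | false :: w => false :: aFun w
    | true :: w => true :: cFun w
  def cFun : List Bool → List Bool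
    | [] => []
    | false :: w => false :: aFun w
    | true :: w => true :: dFun w
  def dFun : List Bool → List Bool
    | [] => []
    | false :: w => false :: w
    | true :: w => true :: bFun w
end

theorem aFun_involutive : Function.Involutive aFun := by
  intro w
  match w with
  | [] => rfl
  | x :: w => simp [aFun]

theorem bcd_involutive :
    ∀ w : List Bool, bFun (bFun w) = w ∧ cFun (cFun w) = w ∧ dFun (dFun w) = w := by
  intro w
  induction w with
  | nil => exact ⟨rfl, rfl, rfl⟩
  | cons x w ih =>
    rcases x with _ | _
    · simp [bFun, cFun, dFun, aFun_involutive w]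
    · simp [bFun, cFun, dFun, ih.1, ih.2.1, ih.2.2]

theorem bFun_involutive : Function.Involutive bFun := fun w => (bcd_involutive w).1
theorem cFun_involutive : Function.Involutive cFun := fun w => (bcd_involutive w).2.1
theorem dFun_involutive : Function.Involutive dFun := fun w => (bcd_involutive w).2.2

theorem aFun_length : ∀ w : List Bool, (aFun w).length = w.length := by
  intro w
  match w with
  | [] => rfl
  | x :: w => simp [aFun]

theorem bcd_length : ∀ w : List Bool,
    (bFun w).length = w.length ∧ (cFun w).length = w.length ∧ (dFun w).length = w.length := by
  intro w
  induction w with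
  | nil => exact ⟨rfl, rfl, rfl⟩
  | cons x w ih =>
    rcases x with _ | _
    · simp [bFun, cFun, dFun, aFun_length w]
    · simp [bFun, cFun, dFun, ih.1, ih.2.1, ih.2.2]

theorem bFun_length : ∀ w, (bFun w).length = w.length := fun w => (bcd_length w).1
theorem cFun_length : ∀ w, (cFun w).length = w.length := fun w => (bcd_length w).2.1
theorem dFun_length : ∀ w, (dFun w).length = w.length := fun w => (bcd_length w).2.2

/-- The generators of the first Grigorchuk group as permutations of the vertex set
`{0,1}*` of the rooted binary tree. -/
def aPerm : Equiv.Perm (List Bool) := aFun_involutive.toPerm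
def bPerm : Equiv.Perm (List Bool) := bFun_involutive.toPerm
def cPerm : Equiv.Perm (List Bool) := cFun_involutive.toPerm
def dPerm : Equiv.Perm (List Bool) := dFun_involutive.toPerm

/-- The generating set `S = {a, b, c, d}` (a set of involutions). -/
def Sset : Set (Equiv.Perm (List Bool)) := {aPerm, bPerm, cPerm, dPerm}

/-- The first Grigorchuk group. -/
def Grigorchuk : Subgroup (Equiv.Perm (List Bool)) := Subgroup.closure Sset

/-- Word length with respect to `S = {a, b, c, d}`. -/
def wordLength (g : Equiv.Perm (List Bool)) : ℕ :=
  sInf {k | ∃ l : List (Equiv.Perm (List Bool)),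
    (∀ x ∈ l, x ∈ Sset) ∧ l.length = k ∧ l.prod = g}

/-- The growth function of the first Grigorchuk group with respect to `S`. -/
def growthGrig (m : ℕ) : ℕ :=
  Nat.card {g : Equiv.Perm (List Bool) |
    ∃ l : List (Equiv.Perm (List Bool)), (∀ x ∈ l, x ∈ Sset) ∧ l.length ≤ m ∧ l.prod = g}

/-! ### Level transfer -/

def levelFun (n : ℕ) (f : List Bool → List Bool) (v : Fin n → Bool) : Fin n → Bool :=
  fun i => (f (List.ofFn v)).getD i false

theorem levelFun_involutive (n : ℕ) (f : List Bool → List Bool)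
    (hlen : ∀ l, (f l).length = l.length) (hinv : Function.Involutive f) :
    Function.Involutive (levelFun n f) := by
  intro v
  have key : ∀ u : Fin n → Bool, List.ofFn (levelFun n f u) = f (List.ofFn u) := by
    intro u
    apply List.ext_getElem
    · simp [hlen]
    · intro i h1 h2
      simp only [List.getElem_ofFn]
      simp [levelFun, List.getD_eq_getElem, h2]
  funext i
  simp only [levelFun, key v, hinv (List.ofFn v)]
  simp [List.getD_eq_getElem]

/-- The images `a_n, b_n, c_n, d_n` of the Grigorchuk generators in `Sym(X_n)`,
where the `n`-th level `X_n = {0,1}^n` is identified with `Fin n → Bool`. -/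
def aLev (n : ℕ) : Equiv.Perm (Fin n → Bool) :=
  (levelFun_involutive n aFun aFun_length aFun_involutive).toPerm
def bLev (n : ℕ) : Equiv.Perm (Fin n → Bool) :=
  (levelFun_involutive n bFun bFun_length bFun_involutive).toPerm
def cLev (n : ℕ) : Equiv.Perm (Fin n → Bool) :=
  (levelFun_involutive n cFun cFun_length cFun_involutive).toPerm
def dLev (n : ℕ) : Equiv.Perm (Fin n → Bool) :=
  (levelFun_involutive n dFun dFun_length dFun_involutive).toPerm

end Grig

/-! ### The boundary action and actions of words -/

/-- The (continuous extension to the boundary `∂T = {0,1}^ℕ` of the) action of a tree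
automorphism on the boundary of the rooted binary tree. -/
def boundaryAct (g : Equiv.Perm (List Bool)) (ξ : ℕ → Bool) : ℕ → Bool :=
  fun n => (g (List.ofFn fun i : Fin (n + 1) => ξ i)).getD n false

/-- Applying a word of generators to a vertex, letter by letter: the right action of the
word `l` (the generators in `S` are involutions). -/
def wordApply (l : List (Equiv.Perm (List Bool))) (v : List Bool) : List Bool :=
  l.foldl (fun v s => s v) v

/-- The right action of a word on a boundary point. -/
def wordApplyB (l : List (Equiv.Perm (List Bool))) (ξ : ℕ → Bool) : ℕ → Bool :=
  l.foldl (fun ξ s => boundaryAct s ξ) ξ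

/-- The boundary point `ρ = 1^∞`. -/
def rhoInf : ℕ → Bool := fun _ => true

/-- The vertex `ρ_n = 1^n` of the `n`-th level. -/
def rhoVertex (n : ℕ) : List Bool := List.replicate n true

/-- The vertex `η_n = 1^{n-1}0` of the `n`-th level. -/
def etaVertex (n : ℕ) : List Bool := List.replicate (n - 1) true ++ [false]
/-! ### Auxiliary development for the fixation transfer theorem -/

namespace GrigProof
open Grig

inductive Gen : Type
  | A | B | C | D
deriving DecidableEq

def Gen.toFun : Gen → (List Bool → List Bool)
  | .A => aFun
  | .B => bFun
  | .C => cFun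
  | .D => dFun

def isA : Gen → Bool
  | .A => true
  | _ => false

/-- Evaluation of a word of generators (leftmost letter applied last). -/
def geval : List Gen → List Bool → List Bool
  | [], v => v
  | g :: l, v => g.toFun (geval l v)

theorem gen_length (g : Gen) (v : List Bool) : (g.toFun v).length = v.length := by
  cases g <;> simp [Gen.toFun, aFun_length, bFun_length, cFun_length, dFun_length]

theorem gen_nil (g : Gen) : g.toFun [] = [] := by
  cases g <;> rfl

theorem geval_length (l : List Gen) (v : List Bool) : (geval l v).length = v.length := by
  induction l with
  | nil => rfl
  | cons g l ih => simp [geval, gen_length, ih]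

theorem geval_nil (l : List Gen) : geval l [] = [] := by
  induction l with
  | nil => rfl
  | cons g l ih => simp [geval, ih, gen_nil]

theorem aFun_pres (v w : List Bool) : ∃ u, aFun (v ++ w) = aFun v ++ u := by
  cases v with
  | nil => exact ⟨aFun w, rfl⟩
  | cons x v => exact ⟨w, rfl⟩

theorem bcd_pres (v : List Bool) : ∀ w,
    (∃ u, bFun (v ++ w) = bFun v ++ u) ∧ (∃ u, cFun (v ++ w) = cFun v ++ u) ∧
      (∃ u, dFun (v ++ w) = dFun v ++ u) := by
  induction v with
  | nil => exact fun w => ⟨⟨bFun w, rfl⟩, ⟨cFun w, rfl⟩, ⟨dFun w, rfl⟩⟩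
  | cons x v ih =>
    intro w
    cases x
    · obtain ⟨u, hu⟩ := aFun_pres v w
      exact ⟨⟨u, by simp [bFun, hu]⟩, ⟨u, by simp [cFun, hu]⟩, ⟨w, by simp [dFun]⟩⟩
    · obtain ⟨⟨ub, hub⟩, ⟨uc, huc⟩, ⟨ud, hud⟩⟩ := ih w
      exact ⟨⟨uc, by simp [bFun, huc]⟩, ⟨ud, by simp [cFun, hud]⟩, ⟨ub, by simp [dFun, hub]⟩⟩

theorem gen_pres (g : Gen) (v w : List Bool) : ∃ u, g.toFun (v ++ w) = g.toFun v ++ u := by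
  cases g
  · exact aFun_pres v w
  · exact (bcd_pres v w).1
  · exact (bcd_pres v w).2.1
  · exact (bcd_pres v w).2.2

theorem geval_pres (l : List Gen) (v w : List Bool) :
    ∃ u, geval l (v ++ w) = geval l v ++ u := by
  induction l with
  | nil => exact ⟨w, rfl⟩
  | cons g l ih =>
    obtain ⟨u, hu⟩ := ih
    obtain ⟨u', hu'⟩ := gen_pres g (geval l v) u
    exact ⟨u', by simp [geval, hu, hu']⟩

/-- All six products of two distinct letters among `b, c, d`. -/
theorem bcd_mul (w : List Bool) :
    bFun (cFun w) = dFun w ∧ cFun (dFun w) = bFun w ∧ dFun (bFun w) = cFun w ∧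
    cFun (bFun w) = dFun w ∧ dFun (cFun w) = bFun w ∧ bFun (dFun w) = cFun w := by
  induction w with
  | nil => exact ⟨rfl, rfl, rfl, rfl, rfl, rfl⟩
  | cons x w ih =>
    cases x
    · simp [bFun, cFun, dFun, aFun_involutive w]
    · simp [bFun, cFun, dFun, ih.1, ih.2.1, ih.2.2.1, ih.2.2.2.1, ih.2.2.2.2.1,
        ih.2.2.2.2.2]

/-- Combination table for two non-`a` generators. -/
def comb : Gen → Gen → Option Gen
  | .B, .B => none | .C, .C => none | .D, .D => none
  | .B, .C => some .D | .C, .B => some .D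
  | .B, .D => some .C | .D, .B => some .C
  | .C, .D => some .B | .D, .C => some .B
  | _, _ => none

theorem comb_spec (g h : Gen) (hg : isA g = false) (hh : isA h = false) (w : List Bool) :
    g.toFun (h.toFun w) = (comb g h).elim w (fun z => z.toFun w) := by
  cases g <;> cases h <;>
    simp_all [isA, comb, Gen.toFun, (bcd_mul w).1, (bcd_mul w).2.1, (bcd_mul w).2.2.1,
      (bcd_mul w).2.2.2.1, (bcd_mul w).2.2.2.2.1, (bcd_mul w).2.2.2.2.2,
      bFun_involutive w, cFun_involutive w, dFun_involutive w]

theorem comb_isA (g h z : Gen) (hz : comb g h = some z) : isA z = false := by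
  cases g <;> cases h <;> simp [comb] at hz <;> simp [← hz, isA]

/-- An alternating word: letters alternate between `a` and `{b,c,d}`. -/
def Alt (l : List Gen) : Prop := l.Chain' (fun x y => isA x ≠ isA y)

def consRed : Gen → List Gen → List Gen
  | g, [] => [g]
  | g, h :: t =>
    if isA g then (if isA h then t else g :: h :: t)
    else if isA h then g :: h :: t
    else match comb g h with
      | none => t
      | some z => z :: t

theorem isA_eq_true (g : Gen) : isA g = true ↔ g = .A := by
  cases g <;> simp [isA]

theorem geval_consRed (g : Gen) (l : List Gen) (w : List Bool) :
    geval (consRed g l) w = g.toFun (geval l w) := by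
  cases l with
  | nil => rfl
  | cons h t =>
    by_cases hg : isA g
    · by_cases hh : isA h
      · rw [(isA_eq_true g).1 hg, (isA_eq_true h).1 hh]
        simp [consRed, isA, geval, Gen.toFun, aFun_involutive (geval t w)]
      · simp [consRed, hg, hh, geval]
    · by_cases hh : isA h
      · simp [consRed, hg, hh, geval]
      · rcases hzc : comb g h with _ | z
        · simp only [consRed, if_neg hg, if_neg hh, hzc]
          rw [show geval (h :: t) w = h.toFun (geval t w) from rfl,
            comb_spec g h (by simpa using hg) (by simpa using hh), hzc]
          rfl
        · simp only [consRed, if_neg hg, if_neg hh, hzc]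
          rw [show geval (h :: t) w = h.toFun (geval t w) from rfl,
            comb_spec g h (by simpa using hg) (by simpa using hh), hzc]
          rfl

theorem length_consRed (g : Gen) (l : List Gen) :
    (consRed g l).length ≤ l.length + 1 := by
  cases l with
  | nil => simp [consRed]
  | cons h t =>
    by_cases hg : isA g <;> by_cases hh : isA h <;>
      simp only [consRed, if_pos, if_neg, hg, hh, ite_true, ite_false] <;>
      first
        | (simp; omega)
        | (rcases hzc : comb g h with _ | z <;> simp <;> omega)

theorem alt_consRed (g : Gen) (l : List Gen) (hl : Alt l) : Alt (consRed g l) := by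
  cases l with
  | nil => simp [consRed, Alt, List.Chain']
  | cons h t =>
    by_cases hg : isA g
    · by_cases hh : isA h
      · simpa [consRed, hg, hh, Alt, List.Chain'] using hl.tail
      · have heq : consRed g (h :: t) = g :: h :: t := by simp [consRed, hg, hh]
        rw [Alt, heq]
        exact List.isChain_cons_cons.2 ⟨by simp_all, hl⟩
    · by_cases hh : isA h
      · have heq : consRed g (h :: t) = g :: h :: t := by simp [consRed, hg, hh]
        rw [Alt, heq]
        exact List.isChain_cons_cons.2 ⟨by simp_all, hl⟩
      · rcases hzc : comb g h with _ | z
        · simpa [consRed, hg, hh, hzc, Alt, List.Chain'] using hl.tail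
        · have heq : consRed g (h :: t) = z :: t := by simp [consRed, hg, hh, hzc]
          rw [Alt, heq]
          cases t with
          | nil => simp [List.Chain']
          | cons u t' =>
            refine List.isChain_cons_cons.2 ⟨?_, (List.isChain_cons_cons.1 hl).2⟩
            have hu : isA h ≠ isA u := (List.isChain_cons_cons.1 hl).1
            have hhf : isA h = false := by simpa using hh
            have huu : isA u = true := by
              cases hiu : isA u
              · exact absurd (hhf.trans hiu.symm) hu
              · rfl
            rw [comb_isA g h z hzc, huu]
            simp

def reduce : List Gen → List Gen
  | [] => []
  | g :: l => consRed g (reduce l)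

theorem geval_reduce (l : List Gen) (w : List Bool) : geval (reduce l) w = geval l w := by
  induction l with
  | nil => rfl
  | cons g l ih => rw [reduce, geval_consRed, ih]; rfl

theorem alt_reduce (l : List Gen) : Alt (reduce l) := by
  induction l with
  | nil => simp [reduce, Alt, List.Chain']
  | cons g l ih => exact alt_consRed g _ ih

theorem length_reduce (l : List Gen) : (reduce l).length ≤ l.length := by
  induction l with
  | nil => simp [reduce]
  | cons g l ih =>
    calc (consRed g (reduce l)).length ≤ (reduce l).length + 1 := length_consRed _ _
      _ ≤ l.length + 1 := by omega

theorem alt_countP : ∀ l : List Gen, Alt l →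
    l.countP (fun g => !isA g) ≤ (l.length + 1) / 2
  | [] , _ => by simp
  | [x], _ => by cases x <;> simp [isA]
  | x :: y :: t, h => by
    have h1 : isA x ≠ isA y := (List.isChain_cons_cons.1 h).1
    have h2 : Alt t := (List.isChain_cons_cons.1 h).2.tail
    have ih := alt_countP t h2
    simp only [List.countP_cons, List.length_cons]
    have : ((if (!isA x) = true then 1 else 0) + (if (!isA y) = true then 1 else 0)) ≤ 1 := by
      cases hx : isA x <;> cases hy : isA y <;> simp_all
    omega

/-! ### The derived word along the 1-ray -/

def stepG : Gen → Bool × List Gen → Bool × List Gen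
  | .A, (y, t) => (!y, t)
  | .B, (false, t) => (false, .A :: t)
  | .B, (true, t) => (true, .C :: t)
  | .C, (false, t) => (false, .A :: t)
  | .C, (true, t) => (true, .D :: t)
  | .D, (false, t) => (false, t)
  | .D, (true, t) => (true, .B :: t)

def derive (l : List Gen) (x : Bool) : Bool × List Gen := l.foldr stepG (x, [])

theorem derive_spec (l : List Gen) (x : Bool) (w : List Bool) :
    geval l (x :: w) = (derive l x).1 :: geval (derive l x).2 w := by
  induction l with
  | nil => rfl
  | cons g l ih =>
    have hd : derive (g :: l) x = stepG g (derive l x) := rfl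
    rcases hp : derive l x with ⟨y, t⟩
    rw [hp] at ih
    rw [hd, hp]
    rw [show geval (g :: l) (x :: w) = g.toFun (geval l (x :: w)) from rfl, ih]
    cases g <;> cases y <;>
      simp [stepG, Gen.toFun, geval, aFun, bFun, cFun, dFun]

theorem derive_length (l : List Gen) (x : Bool) :
    (derive l x).2.length ≤ l.countP (fun g => !isA g) := by
  induction l with
  | nil => simp [derive]
  | cons g l ih =>
    have hd : derive (g :: l) x = stepG g (derive l x) := rfl
    rcases hp : derive l x with ⟨y, t⟩
    have ih2 : t.length ≤ l.countP (fun g => !isA g) := by rw [hp] at ih; exact ih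
    rw [hd, hp, List.countP_cons]
    have iA : isA .A = true := rfl
    have iB : isA .B = false := rfl
    have iC : isA .C = false := rfl
    have iD : isA .D = false := rfl
    cases g <;> cases y <;> simp only [stepG, List.length_cons, iA, iB, iC, iD,
      Bool.not_true, Bool.not_false, if_true, if_false, reduceIte] <;> omega

/-! ### The iterated sections along the 1-ray -/

def seqL (l : List Gen) : ℕ → List Gen
  | 0 => reduce l
  | k + 1 => reduce (derive (seqL l k) true).2

theorem alt_seqL (l : List Gen) (k : ℕ) : Alt (seqL l k) := by
  cases k <;> exact alt_reduce _

theorem seqL_step_len (l : List Gen) (k : ℕ) :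
    (seqL l (k + 1)).length ≤ ((seqL l k).length + 1) / 2 := by
  calc (seqL l (k + 1)).length ≤ (derive (seqL l k) true).2.length := length_reduce _
    _ ≤ (seqL l k).countP (fun g => !isA g) := derive_length _ _
    _ ≤ ((seqL l k).length + 1) / 2 := alt_countP _ (alt_seqL l k)

theorem seqL_len (l : List Gen) : ∀ k, (seqL l k).length ≤ l.length / 2 ^ k + 1 := by
  intro k
  induction k with
  | zero => simpa [seqL] using (length_reduce l).trans (Nat.le_succ _)
  | succ k ih =>
    have h1 := seqL_step_len l k
    have h2 : ((seqL l k).length + 1) / 2 ≤ (l.length / 2 ^ k + 2) / 2 :=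
      Nat.div_le_div_right (by omega)
    have h3 : (l.length / 2 ^ k + 2) / 2 = l.length / 2 ^ k / 2 + 1 := by omega
    have h4 : l.length / 2 ^ k / 2 = l.length / 2 ^ (k + 1) := by
      rw [Nat.div_div_eq_div_mul, pow_succ]
    omega

/-- The step lemma: evaluating `seqL l k` on `true :: w`. -/
theorem seqL_step (l : List Gen) (k : ℕ) (w : List Bool) :
    geval (seqL l k) (true :: w) =
      (derive (seqL l k) true).1 :: geval (seqL l (k + 1)) w := by
  rw [derive_spec, seqL, geval_reduce]

/-- `b`, `c`, `d` fix every vertex `1^m`. -/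
theorem bcd_fix (m : ℕ) :
    bFun (List.replicate m true) = List.replicate m true ∧
    cFun (List.replicate m true) = List.replicate m true ∧
    dFun (List.replicate m true) = List.replicate m true := by
  induction m with
  | zero => exact ⟨rfl, rfl, rfl⟩
  | succ m ih =>
    rw [List.replicate_succ]
    exact ⟨by rw [show bFun (true :: List.replicate m true) = true :: cFun (List.replicate m true) from rfl, ih.2.1],
      by rw [show cFun (true :: List.replicate m true) = true :: dFun (List.replicate m true) from rfl, ih.2.2],
      by rw [show dFun (true :: List.replicate m true) = true :: bFun (List.replicate m true) from rfl, ih.1]⟩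

/-- Forward propagation: if a word fixes `1^n` and its iterated section at depth
`K ≤ n - 1` has length at most one, then it fixes every `1^m`. -/
theorem main_fix (l : List Gen) (n K : ℕ) (hK : (seqL l K).length ≤ 1) (hKn : K + 1 ≤ n)
    (hfix : geval l (List.replicate n true) = List.replicate n true) :
    ∀ m, geval l (List.replicate m true) = List.replicate m true := by
  -- (b) downward the ray: sections fix the remaining ray and emitted bits are true
  have fwd : ∀ k, k ≤ n →
      (geval (seqL l k) (List.replicate (n - k) true) = List.replicate (n - k) true ∧
        ∀ j, j < k → (derive (seqL l j) true).1 = true) := by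
    intro k
    induction k with
    | zero =>
      intro _
      refine ⟨?_, fun j hj => absurd hj (by omega)⟩
      simpa [seqL, geval_reduce] using hfix
    | succ k ih =>
      intro hkn
      obtain ⟨h1, h2⟩ := ih (by omega)
      have hnk : n - k = (n - (k + 1)) + 1 := by omega
      rw [hnk, List.replicate_succ, seqL_step] at h1
      rw [List.cons.injEq] at h1
      refine ⟨h1.2, fun j hj => ?_⟩
      rcases Nat.lt_or_ge j k with h | h
      · exact h2 j h
      · have : j = k := by omega
        rw [this]; exact h1.1
  have hbits : ∀ j, j < K → (derive (seqL l j) true).1 = true :=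
    (fwd K (by omega)).2
  -- (c) the section at depth K fixes the whole ray
  have hend : ∀ m, geval (seqL l K) (List.replicate m true) = List.replicate m true := by
    have hfixK := (fwd K (by omega)).1
    intro m
    rcases hsk : seqL l K with _ | ⟨g, t⟩
    · rfl
    · have ht : t = [] := by
        have := hK; rw [hsk] at this; simpa using List.length_eq_zero_iff.1 (by simpa using this)
      subst ht
      rw [hsk] at hfixK
      have hgval : ∀ v, geval [g] v = g.toFun v := fun v => rfl
      rw [hgval] at hfixK ⊢
      have hnK : n - K = (n - K - 1) + 1 := by omega
      cases g
      · exfalso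
        have hstep : Gen.A.toFun (true :: List.replicate (n - K - 1) true) =
            false :: List.replicate (n - K - 1) true := rfl
        rw [hnK, List.replicate_succ, hstep, List.cons.injEq] at hfixK
        exact Bool.false_ne_true hfixK.1
      · exact (bcd_fix m).1
      · exact (bcd_fix m).2.1
      · exact (bcd_fix m).2.2
  -- (d) propagate back up to depth 0
  have back : ∀ j, j ≤ K →
      ∀ m, geval (seqL l (K - j)) (List.replicate m true) = List.replicate m true := by
    intro j
    induction j with
    | zero => intro _; simpa using hend
    | succ j ih =>
      intro hjK m
      have hKj : K - (j + 1) + 1 = K - j := by omega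
      cases m with
      | zero => simpa using geval_nil _
      | succ m =>
        rw [List.replicate_succ, seqL_step, hKj, ih (by omega) m,
          hbits (K - (j + 1)) (by omega)]
  intro m
  have := back K (le_refl K) m
  simpa [seqL, geval_reduce] using this

end GrigProof

namespace GrigProof
open Grig

theorem sset_self_inv : ∀ x ∈ Sset, x⁻¹ = x := by
  intro x hx
  rcases hx with rfl | rfl | rfl | rfl <;> exact Equiv.ext fun v => rfl

theorem reverse_prod (l : List (Equiv.Perm (List Bool))) (hl : ∀ y ∈ l, y ∈ Sset) :
    l.reverse.prod = l.prod⁻¹ := by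
  induction l with
  | nil => simp
  | cons x l ih =>
    have hx := sset_self_inv x (hl x List.mem_cons_self)
    rw [List.reverse_cons, List.prod_append, ih (fun y hy => hl y (List.mem_cons_of_mem _ hy))]
    simp [hx, mul_inv_rev]

theorem exists_word (g : Equiv.Perm (List Bool)) (hg : g ∈ Grigorchuk) :
    ∃ l : List (Equiv.Perm (List Bool)), (∀ y ∈ l, y ∈ Sset) ∧ l.prod = g := by
  refine Subgroup.closure_induction (p := fun x _ => ∃ l : List (Equiv.Perm (List Bool)), (∀ y ∈ l, y ∈ Sset) ∧ l.prod = x)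
    ?_ ?_ ?_ ?_ hg
  · exact fun x hx => ⟨[x], by simpa using hx, by simp⟩
  · exact ⟨[], by simp, rfl⟩
  · rintro x y _ _ ⟨l₁, h₁, rfl⟩ ⟨l₂, h₂, rfl⟩
    refine ⟨l₁ ++ l₂, fun z hz => ?_, by simp⟩
    rcases List.mem_append.1 hz with h | h
    exacts [h₁ z h, h₂ z h]
  · rintro x _ ⟨l, hl, rfl⟩
    exact ⟨l.reverse, fun y hy => hl y (List.mem_reverse.1 hy), reverse_prod l hl⟩

theorem exists_gen_word (l : List (Equiv.Perm (List Bool))) (hl : ∀ x ∈ l, x ∈ Sset) :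
    ∃ gl : List Gen, gl.length = l.length ∧ ∀ v, geval gl v = l.prod v := by
  induction l with
  | nil => exact ⟨[], rfl, fun v => by simp [geval]⟩
  | cons x l ih =>
    obtain ⟨gl, hlen, hev⟩ := ih fun y hy => hl y (List.mem_cons_of_mem _ hy)
    have hx := hl x List.mem_cons_self
    have key : ∀ γ : Gen, γ.toFun = ⇑x → ∃ gl' : List Gen, gl'.length = (x :: l).length ∧
        ∀ v, geval gl' v = (x :: l).prod v := by
      intro γ hγ
      refine ⟨γ :: gl, by simp [hlen], fun v => ?_⟩
      rw [List.prod_cons, Equiv.Perm.mul_apply,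
        show geval (γ :: gl) v = γ.toFun (geval gl v) from rfl, hev, hγ]
    rcases hx with rfl | rfl | rfl | rfl
    · exact key .A rfl
    · exact key .B rfl
    · exact key .C rfl
    · exact key .D rfl

end GrigProof
/-- For `g ∈ 𝒢` and `n ≥ ⌈log₂ |g|_S⌉ + 2`, the element `g` fixes the vertex
`ρ_n = 1^n` if and only if it fixes the boundary point `ρ = 1^∞`. -/
theorem grigorchuk_fixation_transfer (g : Equiv.Perm (List Bool))
    (hg : g ∈ Grig.Grigorchuk) (n : ℕ) (hn : Nat.clog 2 (Grig.wordLength g) + 2 ≤ n) :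
    g (List.replicate n true) = List.replicate n true ↔
      boundaryAct g rhoInf = rhoInf := by
  classical
  obtain ⟨l, hlS, hlp⟩ := GrigProof.exists_word g hg
  have hne : {k | ∃ l : List (Equiv.Perm (List Bool)),
      (∀ x ∈ l, x ∈ Grig.Sset) ∧ l.length = k ∧ l.prod = g}.Nonempty :=
    ⟨l.length, l, hlS, rfl, hlp⟩
  have hmem : ∃ l₀ : List (Equiv.Perm (List Bool)), (∀ x ∈ l₀, x ∈ Grig.Sset) ∧
      l₀.length = Grig.wordLength g ∧ l₀.prod = g := Nat.sInf_mem hne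
  obtain ⟨l₀, h₀S, h₀len, h₀p⟩ := hmem
  obtain ⟨gl, hgllen, hglev⟩ := GrigProof.exists_gen_word l₀ h₀S
  have hev : ∀ v, GrigProof.geval gl v = g v := fun v => by rw [hglev v, h₀p]
  have hofn : ∀ k : ℕ, (List.ofFn fun i : Fin (k + 1) => rhoInf ↑i) =
      List.replicate (k + 1) true := fun k => List.ofFn_const _ _
  constructor
  · intro hfixn
    set L := Grig.wordLength g with hL
    set K := Nat.clog 2 L + 1 with hKdef
    have hlen' : gl.length = L := by rw [hgllen, h₀len]
    have hLK : L < 2 ^ K := by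
      rcases Nat.eq_zero_or_pos L with h0 | h0
      · rw [h0]; positivity
      · have h1 : L ≤ 2 ^ Nat.clog 2 L := Nat.le_pow_clog one_lt_two L
        have h2 : 2 ^ Nat.clog 2 L < 2 ^ K :=
          Nat.pow_lt_pow_right one_lt_two (by omega)
        omega
    have hK : (GrigProof.seqL gl K).length ≤ 1 := by
      have h1 := GrigProof.seqL_len gl K
      rw [hlen', Nat.div_eq_of_lt hLK] at h1
      omega
    have hall := GrigProof.main_fix gl n K hK (by omega) (by rw [hev]; exact hfixn)
    funext k
    show (g (List.ofFn fun i : Fin (k + 1) => rhoInf ↑i)).getD k false = rhoInf k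
    rw [hofn, ← hev, hall (k + 1)]
    have : (List.replicate (k + 1) true).getD k false = true := by
      rw [List.getD_eq_getElem _ _ (by simp)]; simp
    exact this
  · intro hb
    have hbk : ∀ k : ℕ, (g (List.replicate (k + 1) true)).getD k false = true := by
      intro k
      have h1 := congrFun hb k
      rw [show boundaryAct g rhoInf k =
        (g (List.ofFn fun i : Fin (k + 1) => rhoInf ↑i)).getD k false from rfl, hofn] at h1
      exact h1
    have claim : ∀ k, GrigProof.geval gl (List.replicate k true) = List.replicate k true := by
      intro k
      induction k with
      | zero => exact GrigProof.geval_nil gl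
      | succ k ih =>
        obtain ⟨u, hu⟩ := GrigProof.geval_pres gl (List.replicate k true) [true]
        rw [← List.replicate_succ', ih] at hu
        have hulen : u.length = 1 := by
          have h2 := GrigProof.geval_length gl (List.replicate (k + 1) true)
          rw [hu] at h2
          simp at h2
          omega
        obtain ⟨x, rfl⟩ := List.length_eq_one_iff.1 hulen
        have hx : x = true := by
          have h1 := hbk k
          rw [← hev, hu] at h1
          rw [List.getD_append_right _ _ _ _ (by simp)] at h1
          simpa using h1
        rw [hu, hx, ← List.replicate_succ']
    rw [← hev]; exact claim n

end
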